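/- Let m be a positive integer. For every positive integer n with n > (L_{2m} + L_{2m}² − 3)³, if σ₂(n) − n² = L_{2m}·n + L_{2m}² − 3 (as integers), then either there exists an integer k ≥ 0 such that n = L_{2k+1} · L_{2k+2m+1} with both L_{2k+1} and L_{2k+2m+1} prime, or there exists an integer k with 0 ≤ k < m and m ≠ 2k+1 such that n = L_{2k+1} · L_{2m−2k−1} with both L_{2k+1} and L_{2m−2k−1} prime. -/

import Mathlib

/-- The Lucas numbers: `L 0 = 2`, `L 1 = 1`, `L (n+2) = L (n+1) + L n`. -/
def lucasNum : ℕ → ℕ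
  | 0 => 2
  | 1 => 1
  | n + 2 => lucasNum (n + 1) + lucasNum n

lemma lucas_pos : ∀ n, 0 < lucasNum n
  | 0 => by simp [lucasNum]
  | 1 => by simp [lucasNum]
  | n + 2 => by have := lucas_pos (n+1); have := lucas_pos n; simp [lucasNum]; omega

lemma lucas_fib : ∀ n, 2 * lucasNum (n+1) = lucasNum n + 5 * Nat.fib n ∧
    2 * Nat.fib (n+1) = lucasNum n + Nat.fib n
  | 0 => by simp [lucasNum]
  | 1 => by simp [lucasNum]
  | n + 2 => by
    obtain ⟨h1, h2⟩ := lucas_fib n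
    obtain ⟨h3, h4⟩ := lucas_fib (n+1)
    have e1 : lucasNum (n+3) = lucasNum (n+2) + lucasNum (n+1) := by simp [lucasNum]
    have e2 : lucasNum (n+2) = lucasNum (n+1) + lucasNum n := by simp [lucasNum]
    have e3 : Nat.fib (n+3) = Nat.fib (n+1) + Nat.fib (n+2) := by
      rw [show n+3 = (n+1)+2 from rfl, Nat.fib_add_two]
    have e4 : Nat.fib (n+2) = Nat.fib n + Nat.fib (n+1) := Nat.fib_add_two
    constructor <;> simp only [show n+2+1 = n+3 from rfl] <;> omega

lemma lucas_step : ∀ n, 1 ≤ n → lucasNum n < lucasNum (n+1)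
  | n + 1, _ => by have := lucas_pos n; simp [lucasNum]; omega

lemma lucas_lt_lucas : ∀ {a b : ℕ}, 1 ≤ a → a < b → lucasNum a < lucasNum b := by
  intro a b ha h
  induction b with
  | zero => omega
  | succ b ih =>
    rcases Nat.lt_succ_iff_lt_or_eq.mp h with h' | rfl
    · exact lt_trans (ih h') (lucas_step b (by omega))
    · exact lucas_step a ha

lemma lucas_le_lucas : ∀ {a b : ℕ}, 1 ≤ a → a ≤ b → lucasNum a ≤ lucasNum b := by
  intro a b ha h
  rcases eq_or_lt_of_le h with rfl | h'
  · exact le_refl _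
  · exact le_of_lt (lucas_lt_lucas ha h')

lemma lucas_add (a : ℕ) : ∀ b, 2 * lucasNum (a+b) =
    lucasNum a * lucasNum b + 5 * (Nat.fib a * Nat.fib b)
  | 0 => by simp [lucasNum, mul_comm]
  | 1 => by
    have := (lucas_fib a).1
    simp only [show lucasNum 1 = 1 from rfl, Nat.fib_one, mul_one]
    omega
  | b + 2 => by
    have h1 := lucas_add a b
    have h2 := lucas_add a (b+1)
    have e1 : lucasNum (a+(b+2)) = lucasNum (a+(b+1)) + lucasNum (a+b) := by
      rw [show a+(b+2) = (a+b)+2 from by ring, show a+(b+1) = (a+b)+1 from by ring]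
      simp [lucasNum]
    have e2 : lucasNum (b+2) = lucasNum (b+1) + lucasNum b := by simp [lucasNum]
    have e3 : Nat.fib (b+2) = Nat.fib b + Nat.fib (b+1) := Nat.fib_add_two
    zify at h1 h2 ⊢
    rw [e1, e2, e3]
    push_cast
    linear_combination h1 + h2

lemma lucas_sq_sub (n : ℕ) : (lucasNum n : ℤ)^2 = 5 * (Nat.fib n : ℤ)^2 + 4 * (-1)^n := by
  induction n with
  | zero => simp [lucasNum]
  | succ n ih =>
    have h1 := (lucas_fib n).1
    have h2 := (lucas_fib n).2
    zify at h1 h2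
    have key : (4:ℤ) * ((lucasNum (n+1):ℤ)^2 - 5 * (Nat.fib (n+1):ℤ)^2)
        = -4 * ((lucasNum n:ℤ)^2 - 5 * (Nat.fib n:ℤ)^2) := by
      linear_combination (2*(lucasNum (n+1):ℤ) + (lucasNum n:ℤ) + 5*(Nat.fib n:ℤ)) * h1
        - 5 * (2*(Nat.fib (n+1):ℤ) + (lucasNum n:ℤ) + (Nat.fib n:ℤ)) * h2
    have : (-1:ℤ)^(n+1) = -(-1)^n := by ring
    rw [this]
    nlinarith [key, ih]

lemma pell_sol : ∀ w : ℕ, ∀ x : ℕ, 0 < x → 0 < w → x^2 + 4 = 5*w^2 →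
    ∃ k, x = lucasNum (2*k+1) ∧ w = Nat.fib (2*k+1) := by
  intro w
  induction w using Nat.strong_induction_on with
  | _ w ih =>
    intro x hx hw h
    rcases eq_or_lt_of_le (show 1 ≤ w from hw) with hw1 | hw2
    · subst hw1
      refine ⟨0, ?_, ?_⟩
      · have h1 : x^2 = 1 := by nlinarith
        have : x = 1 := by nlinarith
        simpa [lucasNum] using this
      · simp
    · have hpar : x % 2 = w % 2 := by
        have e1 : x^2 % 2 = (x%2)^2 % 2 := Nat.pow_mod x 2 2
        have e2 : w^2 % 2 = (w%2)^2 % 2 := Nat.pow_mod w 2 2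
        rcases Nat.mod_two_eq_zero_or_one x with hx1 | hx1 <;>
          rcases Nat.mod_two_eq_zero_or_one w with hw1 | hw1 <;>
          simp [hx1, hw1] at e1 e2 <;> omega
      have h5w3x : 5*w < 3*x := by nlinarith
      have hx3w : x < 3*w := by nlinarith
      have hwx : w < x := by nlinarith
      obtain ⟨x', hx'⟩ : ∃ x', 2*x' + 5*w = 3*x := ⟨(3*x - 5*w)/2, by omega⟩
      obtain ⟨z', hz'⟩ : ∃ z', 2*z' + x = 3*w := ⟨(3*w - x)/2, by omega⟩
      have hx'pos : 0 < x' := by omega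
      have hz'pos : 0 < z' := by omega
      have hz'lt : z' < w := by omega
      have h' : x'^2 + 4 = 5*z'^2 := by
        have hzx' : (2*(x':ℤ) + 5*w) = 3*x := by exact_mod_cast hx'
        have hzz' : (2*(z':ℤ) + x) = 3*w := by exact_mod_cast hz'
        have hz : ((x:ℤ))^2 + 4 = 5*(w:ℤ)^2 := by exact_mod_cast h
        have key : (4:ℤ)*(x':ℤ)^2 + 16 = 20*(z':ℤ)^2 := by
          linear_combination (2*(x':ℤ) + 3*x - 5*w) * hzx'
            - 5*(2*(z':ℤ) + 3*w - x) * hzz' + 4*hz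
        have : ((x'^2 + 4 : ℕ) : ℤ) = ((5*z'^2 : ℕ) : ℤ) := by push_cast; linarith
        exact_mod_cast this
      obtain ⟨k, hk1, hk2⟩ := ih z' hz'lt x' hx'pos hz'pos h'
      have hL1 := (lucas_fib (2*k+1)).1
      have hL2 := (lucas_fib (2*k+1)).2
      have hL3 := (lucas_fib (2*k+2)).1
      have hL4 := (lucas_fib (2*k+2)).2
      simp only [show 2*k+1+1 = 2*k+2 from by ring, show 2*k+2+1 = 2*k+3 from by ring]
        at hL1 hL2 hL3 hL4
      have e1 : lucasNum (2*k+3) = lucasNum (2*k+2) + lucasNum (2*k+1) := by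
        rw [show 2*k+3 = (2*k+1)+2 from by ring]; simp [lucasNum]
      have e2 : Nat.fib (2*k+3) = Nat.fib (2*k+1) + Nat.fib (2*k+2) := by
        rw [show 2*k+3 = (2*k+1)+2 from by ring, Nat.fib_add_two]
      refine ⟨k+1, ?_, ?_⟩ <;> rw [show 2*(k+1)+1 = 2*k+3 from by ring] <;> omega

lemma sigma_two_prime (p : ℕ) (hp : p.Prime) : ArithmeticFunction.sigma 2 p = 1 + p^2 := by
  rw [ArithmeticFunction.sigma_apply, Nat.Prime.divisors hp]
  rw [Finset.sum_pair hp.one_lt.ne]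
  simp

lemma sigma_two_lower (n q : ℕ) (hn : 1 < n) (hq : q ∣ n) (hq1 : 1 < q) (hqn : q < n) :
    1 + q^2 + n^2 ≤ ArithmeticFunction.sigma 2 n := by
  rw [ArithmeticFunction.sigma_apply]
  have hsub : ({1, q, n} : Finset ℕ) ⊆ n.divisors := by
    intro d hd
    simp only [Finset.mem_insert, Finset.mem_singleton] at hd
    have hn0 : n ≠ 0 := by omega
    rcases hd with rfl | rfl | rfl <;> simp [Nat.mem_divisors, hq, hn0]
  calc 1 + q^2 + n^2 = ∑ d ∈ ({1, q, n} : Finset ℕ), d^2 := by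
        rw [Finset.sum_insert (by simp; omega), Finset.sum_insert (by simp; omega),
          Finset.sum_singleton]
        ring
    _ ≤ _ := Finset.sum_le_sum_of_subset hsub

lemma sigma_two_sq_upper (p : ℕ) (hp : p.Prime) :
    ArithmeticFunction.sigma 2 (p^2) ≤ 1 + p^2 + (p^2)^2 := by
  rw [ArithmeticFunction.sigma_apply]
  have hsub : (p^2).divisors ⊆ ({1, p, p^2} : Finset ℕ) := by
    intro d hd
    rw [Nat.mem_divisors] at hd
    obtain ⟨i, hi, rfl⟩ := (Nat.dvd_prime_pow hp).mp hd.1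
    interval_cases i <;> simp
  calc ∑ d ∈ (p^2).divisors, d^2 ≤ ∑ d ∈ ({1, p, p^2} : Finset ℕ), d^2 :=
        Finset.sum_le_sum_of_subset hsub
    _ ≤ 1 + p^2 + (p^2)^2 := by
        have h1 : 1 < p := hp.one_lt
        rw [Finset.sum_insert (by simp; constructor <;> nlinarith),
          Finset.sum_insert (by simp; nlinarith), Finset.sum_singleton]
        ring_nf; omega

set_option maxHeartbeats 4000000 in
theorem stmt_15 (m : ℕ) (hm : 1 ≤ m) (n : ℕ) (hn : 0 < n)
    (hbig : (n : ℤ) > ((lucasNum (2 * m) : ℤ) + (lucasNum (2 * m) : ℤ) ^ 2 - 3) ^ 3)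
    (heq : ((ArithmeticFunction.sigma 2) n : ℤ) - (n : ℤ) ^ 2 =
      (lucasNum (2 * m) : ℤ) * n + (lucasNum (2 * m) : ℤ) ^ 2 - 3) :
    (∃ k : ℕ, n = lucasNum (2 * k + 1) * lucasNum (2 * k + 2 * m + 1) ∧
      (lucasNum (2 * k + 1)).Prime ∧ (lucasNum (2 * k + 2 * m + 1)).Prime) ∨
    (∃ k : ℕ, k < m ∧ m ≠ 2 * k + 1 ∧
      n = lucasNum (2 * k + 1) * lucasNum (2 * m - (2 * k + 1)) ∧
      (lucasNum (2 * k + 1)).Prime ∧ (lucasNum (2 * m - (2 * k + 1))).Prime) := by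
  set L := lucasNum (2*m) with hLdef
  set F := Nat.fib (2*m) with hFdef
  clear_value L F
  have hL3 : 3 ≤ L := by
    have h2 : lucasNum 2 ≤ lucasNum (2*m) := lucas_le_lucas (by norm_num) (by omega)
    have h3 : lucasNum 2 = 3 := rfl
    omega
  have hLZ3 : (3:ℤ) ≤ (L:ℤ) := by exact_mod_cast hL3
  have hLF : (L:ℤ)^2 = 5*(F:ℤ)^2 + 4 := by
    have h := lucas_sq_sub (2*m)
    rw [show ((-1:ℤ))^(2*m) = 1 from Even.neg_one_pow ⟨m, by ring⟩] at h
    rw [hLdef, hFdef]; linarith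
  have hA9 : (9:ℤ) ≤ (L:ℤ) + (L:ℤ)^2 - 3 := by nlinarith only [hLZ3]
  have hA3 : (L:ℤ) + (L:ℤ)^2 - 3 ≤ ((L:ℤ) + (L:ℤ)^2 - 3)^3 := by
    nlinarith only [hA9, sq_nonneg ((L:ℤ) + (L:ℤ)^2 - 3)]
  have hn729 : (729:ℤ) < (n:ℤ) := by
    have h9 : (9:ℤ)^3 ≤ ((L:ℤ) + (L:ℤ)^2 - 3)^3 := pow_le_pow_left₀ (by norm_num) hA9 3
    have : ((9:ℤ)^3) = 729 := by norm_num
    linarith only [hbig, h9, this]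
  have hn1 : 1 < n := by exact_mod_cast (by linarith only [hn729] : (1:ℤ) < (n:ℤ))
  have hnZ : (729:ℤ) < (n:ℤ) := hn729
  set p := n.minFac with hpdef
  have hpp : p.Prime := Nat.minFac_prime (by omega)
  have hpd : p ∣ n := Nat.minFac_dvd n
  set q := n / p with hqdef
  have hnpq : n = p * q := (Nat.mul_div_cancel' hpd).symm
  have hqd : q ∣ n := Nat.div_dvd_of_dvd hpd
  clear_value p q
  have hp2 : 2 ≤ p := hpp.two_le
  have hq0 : 0 < q := by
    rcases Nat.eq_zero_or_pos q with h | h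
    · rw [h, mul_zero] at hnpq; omega
    · exact h
  by_cases hq1 : q = 1
  · exfalso
    have hnp : n = p := by rw [hnpq, hq1, mul_one]
    have hs : ArithmeticFunction.sigma 2 n = 1 + n^2 := by
      rw [hnp]; exact sigma_two_prime p hpp
    rw [hs] at heq
    push_cast at heq
    have h3n : 3*(n:ℤ) ≤ (L:ℤ)*(n:ℤ) :=
      mul_le_mul_of_nonneg_right hLZ3 (by linarith only [hnZ])
    have hL9 : (9:ℤ) ≤ (L:ℤ)^2 := by nlinarith only [hLZ3]
    linarith only [hLZ3, hnZ, h3n, hL9, heq]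
  have hq2 : 2 ≤ q := by omega
  have hqn : q < n := by
    have h2q : 2*q ≤ p*q := Nat.mul_le_mul_right q hp2
    omega
  have hlow := sigma_two_lower n q hn1 hqd (by omega) hqn
  have hq_le : (q:ℤ)^2 ≤ (L:ℤ)*n + (L:ℤ)^2 - 4 := by
    have hlz : ((1 + q^2 + n^2 : ℕ):ℤ) ≤ ((ArithmeticFunction.sigma 2 n : ℕ):ℤ) := by
      exact_mod_cast hlow
    push_cast at hlz
    linarith only [heq, hlz]
  have hL2n : (L:ℤ)^2 - 4 < (n:ℤ) := by linarith only [hbig, hA3, hLZ3]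
  have hnz : (n:ℤ) = (p:ℤ)*(q:ℤ) := by exact_mod_cast hnpq
  have hqZ2 : (2:ℤ) ≤ (q:ℤ) := by exact_mod_cast hq2
  have hpZ2 : (2:ℤ) ≤ (p:ℤ) := by exact_mod_cast hp2
  have hqLp : (q:ℤ) < ((L:ℤ)+1)*(p:ℤ) := by
    have h1 : (q:ℤ)^2 < (((L:ℤ)+1)*(p:ℤ))*(q:ℤ) := by
      calc (q:ℤ)^2 ≤ (L:ℤ)*n + (L:ℤ)^2 - 4 := hq_le
        _ < (L:ℤ)*n + n := by linarith only [hL2n]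
        _ = (((L:ℤ)+1)*(p:ℤ))*(q:ℤ) := by rw [hnz]; ring
    nlinarith only [h1, hqZ2]
  have hqprime : q.Prime := by
    by_contra hnp
    have hmf : q.minFac^2 ≤ q := Nat.minFac_sq_le_self (by omega) hnp
    have hple : p ≤ q.minFac := by
      rw [hpdef]
      exact Nat.minFac_le_of_dvd (Nat.minFac_prime (by omega : q ≠ 1)).two_le
        ((Nat.minFac_dvd q).trans hqd)
    have hp2q : p^2 ≤ q := le_trans (Nat.pow_le_pow_left hple 2) hmf
    have hp2qZ : (p:ℤ)^2 ≤ (q:ℤ) := by exact_mod_cast hp2q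
    have hpL : (p:ℤ) ≤ (L:ℤ) := by nlinarith only [hqLp, hpZ2, hp2qZ]
    have hq_lt : (q:ℤ) < ((L:ℤ)+1)*(L:ℤ) := by
      calc (q:ℤ) < ((L:ℤ)+1)*(p:ℤ) := hqLp
        _ ≤ ((L:ℤ)+1)*(L:ℤ) := mul_le_mul_of_nonneg_left hpL (by linarith only [hLZ3])
    have hn_lt : (n:ℤ) < (L:ℤ)^3 + (L:ℤ)^2 := by
      rw [hnz]
      calc (p:ℤ)*(q:ℤ) ≤ (L:ℤ)*(q:ℤ) :=
            mul_le_mul_of_nonneg_right hpL (by linarith only [hqZ2])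
        _ < (L:ℤ)*(((L:ℤ)+1)*(L:ℤ)) := by
            exact mul_lt_mul_of_pos_left hq_lt (by linarith only [hLZ3])
        _ = (L:ℤ)^3 + (L:ℤ)^2 := by ring
    have e1 : (L:ℤ)^2 ≤ (L:ℤ) + (L:ℤ)^2 - 3 := by linarith only [hLZ3]
    have e2 : ((L:ℤ)^2)^3 ≤ ((L:ℤ) + (L:ℤ)^2 - 3)^3 :=
      pow_le_pow_left₀ (by positivity) e1 3
    have c2 : (9:ℤ) ≤ (L:ℤ)^2 := by nlinarith only [hLZ3]
    have c3 : (27:ℤ) ≤ (L:ℤ)^3 := by nlinarith only [hLZ3, c2]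
    have c4 : 27*(L:ℤ) ≤ (L:ℤ)^4 := by nlinarith only [hLZ3, c3]
    have hd : (0:ℤ) ≤ (L:ℤ)^4 - (L:ℤ) - 1 := by linarith only [c4, hLZ3]
    have e3 : (L:ℤ)^3 + (L:ℤ)^2 ≤ ((L:ℤ)^2)^3 := by nlinarith only [c2, hd]
    linarith only [hbig, hn_lt, e2, e3]
  have hpq_ne : p ≠ q := by
    rintro rfl
    have hp2n : p^2 = n := by rw [hnpq]; ring
    have hup := sigma_two_sq_upper p hpp
    rw [hp2n] at hup
    have hupZ : ((ArithmeticFunction.sigma 2 n : ℕ):ℤ) ≤ ((1 + n + n^2 : ℕ):ℤ) := by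
      exact_mod_cast hup
    push_cast at hupZ
    have hpn : ((p:ℤ))^2 = (n:ℤ) := by exact_mod_cast hp2n
    have h3n : 3*(n:ℤ) ≤ (L:ℤ)*(n:ℤ) :=
      mul_le_mul_of_nonneg_right hLZ3 (by linarith only [hnZ])
    have hL9 : (9:ℤ) ≤ (L:ℤ)^2 := by nlinarith only [hLZ3]
    linarith only [heq, hupZ, hnZ, h3n, hL9]
  have hplq : p < q := by
    have hple2 : p ≤ q := by
      rw [hpdef]; exact Nat.minFac_le_of_dvd hqprime.two_le hqd
    exact lt_of_le_of_ne hple2 hpq_ne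
  have hcop : Nat.Coprime p q := (Nat.coprime_primes hpp hqprime).mpr hpq_ne
  have hsig : ArithmeticFunction.sigma 2 n = (1+p^2)*(1+q^2) := by
    rw [hnpq, ArithmeticFunction.isMultiplicative_sigma.map_mul_of_coprime hcop,
      sigma_two_prime p hpp, sigma_two_prime q hqprime]
  rw [hsig] at heq
  push_cast at heq
  rw [hnz] at heq
  have E : (p:ℤ)^2 + (q:ℤ)^2 + 4 = (L:ℤ)*(p:ℤ)*(q:ℤ) + (L:ℤ)^2 := by
    linear_combination heq
  -- discriminant is a perfect square
  have hF0 : (F:ℤ) ≠ 0 := by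
    have : 0 < F := by rw [hFdef]; exact Nat.fib_pos.mpr (by omega)
    exact_mod_cast Nat.pos_iff_ne_zero.mp this
  have ht2 : (2*(q:ℤ) - (L:ℤ)*(p:ℤ))^2 = (F:ℤ)^2 * (5*((p:ℤ)^2+4)) := by
    linear_combination 4*E + ((p:ℤ)^2+4)*hLF
  have hFt : (F:ℤ) ∣ (2*(q:ℤ) - (L:ℤ)*(p:ℤ)) := by
    have h2 : (F:ℤ)^2 ∣ (2*(q:ℤ) - (L:ℤ)*(p:ℤ))^2 := ⟨5*((p:ℤ)^2+4), ht2⟩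
    exact (Int.pow_dvd_pow_iff (by norm_num : (2:ℕ) ≠ 0)).mp h2
  obtain ⟨u, hu⟩ := hFt
  have hu2 : u^2 = 5*((p:ℤ)^2+4) := by
    have h3 : (F:ℤ)^2 * u^2 = (F:ℤ)^2 * (5*((p:ℤ)^2+4)) := by
      rw [← ht2, hu]; ring
    exact mul_left_cancel₀ (pow_ne_zero 2 hF0) h3
  have h5u : (5:ℤ) ∣ u := by
    have h5 : (5:ℤ) ∣ u^2 := ⟨(p:ℤ)^2+4, hu2⟩
    exact (by norm_num : Prime (5:ℤ)).dvd_of_dvd_pow h5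
  obtain ⟨v, hv⟩ := h5u
  have hv2 : (p:ℤ)^2 + 4 = 5*v^2 := by
    have h25 : 25*v^2 = 5*((p:ℤ)^2+4) := by rw [hv] at hu2; linear_combination hu2
    linarith
  set w := v.natAbs with hwdef
  have hwv : ((w:ℤ))^2 = v^2 := by
    rw [hwdef]; exact_mod_cast Int.natAbs_sq v
  have hw : p^2 + 4 = 5*w^2 := by
    have : ((p:ℤ))^2 + 4 = 5*((w:ℤ))^2 := by rw [hwv]; exact hv2
    exact_mod_cast this
  have hw0 : 0 < w := by
    rcases Nat.eq_zero_or_pos w with h | h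
    · rw [h] at hw; simp at hw
    · exact h
  obtain ⟨k, hk1, hk2⟩ := pell_sol w p hpp.pos hw0 hw
  set y := lucasNum (2*m + (2*k+1)) with hydef
  clear_value y
  have hadd : 2 * y = L * lucasNum (2*k+1) + 5 * (F * Nat.fib (2*k+1)) := by
    rw [hydef, hLdef, hFdef]; exact lucas_add (2*m) (2*k+1)
  rw [← hk1, ← hk2] at hadd
  have haddZ : 2*(y:ℤ) = (L:ℤ)*(p:ℤ) + 5*((F:ℤ)*(w:ℤ)) := by exact_mod_cast hadd
  have hwZ : (p:ℤ)^2 + 4 = 5*(w:ℤ)^2 := by exact_mod_cast hw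
  have hroot : (y:ℤ)^2 - (L:ℤ)*(p:ℤ)*(y:ℤ) + (p:ℤ)^2 - (L:ℤ)^2 + 4 = 0 := by
    have h4 : (4:ℤ)*((y:ℤ)^2 - (L:ℤ)*(p:ℤ)*(y:ℤ) + (p:ℤ)^2 - (L:ℤ)^2 + 4) = 0 := by
      linear_combination (2*(y:ℤ) + 5*(F:ℤ)*(w:ℤ) - (L:ℤ)*(p:ℤ)) * haddZ
        - 5*(F:ℤ)^2 * hwZ - ((p:ℤ)^2+4) * hLF
    linarith only [h4]
  have hfac : ((q:ℤ) - (y:ℤ)) * ((q:ℤ) + (y:ℤ) - (L:ℤ)*(p:ℤ)) = 0 := by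
    linear_combination E - hroot
  have hyp : (p:ℤ) < (y:ℤ) := by
    have : lucasNum (2*k+1) < lucasNum (2*m + (2*k+1)) :=
      lucas_lt_lucas (by omega) (by omega)
    rw [← hk1, ← hydef] at this
    exact_mod_cast this
  rcases mul_eq_zero.mp hfac with h1 | h2
  · have hqy : q = y := by
      have : (q:ℤ) = (y:ℤ) := by linarith
      exact_mod_cast this
    left
    refine ⟨k, ?_, ?_, ?_⟩
    · rw [hnpq, hk1, hqy, hydef, show 2*k + 2*m + 1 = 2*m + (2*k+1) from by ring]
    · rw [← hk1]; exact hpp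
    · rw [show 2*k + 2*m + 1 = 2*m + (2*k+1) from by ring, ← hydef, ← hqy]; exact hqprime
  · exfalso
    have hyq : (q:ℤ)*(y:ℤ) = (p:ℤ)^2 - (L:ℤ)^2 + 4 := by
      linear_combination (y:ℤ)*h2 - hroot
    have hqpZ : (p:ℤ) < (q:ℤ) := by exact_mod_cast hplq
    have hprod : (p:ℤ)*(p:ℤ) < (q:ℤ)*(y:ℤ) :=
      mul_lt_mul'' hqpZ hyp (by linarith only [hpZ2]) (by linarith only [hpZ2])
    have hL9 : (9:ℤ) ≤ (L:ℤ)^2 := by nlinarith only [hLZ3]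
    linarith only [hyq, hprod, hL9, sq ((p:ℤ)) ▸ (le_refl ((p:ℤ)^2)), (by ring : (p:ℤ)^2 = (p:ℤ)*(p:ℤ))]
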